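/- Two elements w = (f,h) and v = (e,g) of S = K ≀_Γ Sym(Γ) are conjugate in W = K ≀_Γ H if and only if there exists t ∈ H with h^t = g and P(w)^t = P(v). -/

import Mathlib

set_option linter.unusedSectionVars false

/-- The wreath product `K ≀_Γ Sym(Γ)` (with right-action conventions from the paper):
multiplication `(f,h)(e,g) = (f · e^{h⁻¹}, hg)` where `[γ](f·e^{h⁻¹}) = [γ]f * [γ^h]e`. -/
structure Wr (K : Type*) (Γ : Type*) where
  base : Γ → K
  top : Equiv.Perm Γ

namespace Wr

variable {K Γ : Type*} [Group K]

theorem ext' {w v : Wr K Γ} (h1 : w.base = v.base) (h2 : w.top = v.top) : w = v := by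
  cases w; cases v; cases h1; cases h2; rfl

instance : Group (Wr K Γ) where
  mul w v := ⟨fun γ => w.base γ * v.base (w.top γ), w.top.trans v.top⟩
  one := ⟨fun _ => 1, 1⟩
  inv w := ⟨fun γ => (w.base (w.top⁻¹ γ))⁻¹, w.top⁻¹⟩
  mul_assoc a b c := ext' (funext fun γ => mul_assoc _ _ _) (Equiv.trans_assoc _ _ _)
  one_mul a := ext' (funext fun γ => one_mul _) (Equiv.refl_trans _)
  mul_one a := ext' (funext fun γ => mul_one _) (Equiv.trans_refl _)
  inv_mul_cancel a := ext' (funext fun γ => inv_mul_cancel _) (Equiv.symm_trans_self _)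

/-- The support of a permutation, as a set. -/
def psupp (h : Equiv.Perm Γ) : Set Γ := {γ | h γ ≠ γ}

/-- The territory of a wreath product element. -/
def terr (w : Wr K Γ) : Set Γ := psupp w.top ∪ {γ | w.base γ ≠ 1}

/-- Wreath cycles: either trivial top and a singleton territory, or the top is a
single nontrivial cycle and the territory equals its support. -/
def IsWreathCycle (w : Wr K Γ) : Prop :=
  (w.top = 1 ∧ ∃ γ₀, terr w = {γ₀}) ∨ (w.top.IsCycle ∧ terr w = psupp w.top)

/-- The yade of `w` at `γ`: the ordered product `∏_{i=0}^{|h|-1} [γ^{h^i}]f`. -/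
noncomputable def yade (w : Wr K Γ) (γ : Γ) : K :=
  ((List.range (orderOf w.top)).map fun i => w.base ((w.top ^ i) γ)).prod

end Wr

open Wr

namespace Wr

variable {K Γ : Type*} [Group K] [Fintype Γ] [DecidableEq Γ]

/-- The load of a wreath cycle: the conjugacy class of its yades over the territory,
together with the order of the top component. -/
noncomputable def load (z : Wr K Γ) : Set K × ℕ :=
  ({x | ∃ γ ∈ terr z, IsConj (yade z γ) x}, orderOf z.top)

/-- The set of wreath cycles occurring in the disjoint wreath cycle decomposition of `w`. -/
def wCycles (w : Wr K Γ) : Set (Wr K Γ) :=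
  {z | ∃ c ∈ w.top.cycleFactorsFinset,
        z = Wr.mk (fun γ => if c γ ≠ γ then w.base γ else 1) c} ∪
  {z | ∃ γ₀, w.top γ₀ = γ₀ ∧ w.base γ₀ ≠ 1 ∧
        z = Wr.mk (fun γ => if γ = γ₀ then w.base γ else 1) 1}

/-- The territory decomposition `P(w)`: for each load `L`, the set of territories of
the wreath cycles of `w` of load `L`. -/
noncomputable def tdecomp (w : Wr K Γ) : Set K × ℕ → Set (Set Γ) :=
  fun L => {Ω | ∃ z ∈ wCycles w, load z = L ∧ Ω = terr z}

end Wr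

open Wr Equiv Equiv.Perm

theorem Equiv.Perm.inv_apply_self {α : Type*} (f : Equiv.Perm α) (x : α) : f⁻¹ (f x) = x :=
  f.symm_apply_apply x

theorem Equiv.Perm.apply_inv_self {α : Type*} (f : Equiv.Perm α) (x : α) : f (f⁻¹ x) = x :=
  f.apply_symm_apply x

namespace WrAux

variable {K Γ : Type*} [Group K]

theorem mul_base (x y : Wr K Γ) (γ : Γ) : (x * y).base γ = x.base γ * y.base (x.top γ) := rfl
theorem mul_top (x y : Wr K Γ) : (x * y).top = y.top * x.top := rfl
theorem inv_base (x : Wr K Γ) (γ : Γ) : (x⁻¹).base γ = (x.base (x.top⁻¹ γ))⁻¹ := rfl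
theorem inv_top (x : Wr K Γ) : (x⁻¹).top = x.top⁻¹ := rfl

theorem conj_top (a z : Wr K Γ) : (a⁻¹ * z * a).top = a.top * z.top * a.top⁻¹ := rfl

theorem conj_base (a z : Wr K Γ) (γ : Γ) :
    (a⁻¹ * z * a).base γ =
      (a.base (a.top⁻¹ γ))⁻¹ * z.base (a.top⁻¹ γ) * a.base (z.top (a.top⁻¹ γ)) := by
  simp [mul_base, inv_base, inv_top, mul_top, mul_assoc]
section Ypart
variable {K Γ : Type*} [Group K]

/-- Partial yade-type product. -/
noncomputable def ypart (w : Wr K Γ) (γ : Γ) (i : ℕ) : K :=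
  ((List.range i).map fun j => w.base ((w.top ^ j) γ)).prod

theorem ypart_zero (w : Wr K Γ) (γ : Γ) : ypart w γ 0 = 1 := rfl

theorem ypart_succ (w : Wr K Γ) (γ : Γ) (i : ℕ) :
    ypart w γ (i + 1) = ypart w γ i * w.base ((w.top ^ i) γ) := by
  simp [ypart, List.range_succ]

theorem ypart_succ' (w : Wr K Γ) (γ : Γ) (i : ℕ) :
    ypart w γ (i + 1) = w.base γ * ypart w (w.top γ) i := by
  induction i with
  | zero => simp [ypart_succ, ypart_zero]
  | succ i ih =>
      rw [ypart_succ, ih, ypart_succ, mul_assoc, pow_succ, Equiv.Perm.mul_apply]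

theorem ypart_congr {w w' : Wr K Γ} {γ γ' : Γ} {i : ℕ}
    (h : ∀ j, j < i → w.base ((w.top ^ j) γ) = w'.base ((w'.top ^ j) γ')) :
    ypart w γ i = ypart w' γ' i := by
  induction i with
  | zero => rfl
  | succ i ih =>
      rw [ypart_succ, ypart_succ, ih fun j hj => h j (Nat.lt_succ_of_lt hj),
        h i (Nat.lt_succ_self i)]

variable [Fintype Γ] [DecidableEq Γ]

theorem yade_eq_ypart (w : Wr K Γ) (γ : Γ) : yade w γ = ypart w γ (orderOf w.top) := rfl

theorem yade_top_apply (w : Wr K Γ) (γ : Γ) :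
    yade w (w.top γ) = (w.base γ)⁻¹ * yade w γ * w.base γ := by
  have h1 : ypart w γ (orderOf w.top + 1) = w.base γ * ypart w (w.top γ) (orderOf w.top) :=
    ypart_succ' _ _ _
  have h2 : ypart w γ (orderOf w.top + 1) = ypart w γ (orderOf w.top) * w.base γ := by
    rw [ypart_succ]
    congr 2
    rw [pow_orderOf_eq_one]; rfl
  rw [yade_eq_ypart, yade_eq_ypart]
  rw [h2] at h1
  rw [mul_assoc, h1, ← mul_assoc, inv_mul_cancel, one_mul]

theorem isConj_yade_pow (w : Wr K Γ) (γ : Γ) (i : ℕ) :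
    IsConj (yade w γ) (yade w ((w.top ^ i) γ)) := by
  induction i with
  | zero => rw [pow_zero, Equiv.Perm.one_apply]
  | succ i ih =>
      have : (w.top ^ (i + 1)) γ = w.top ((w.top ^ i) γ) := by
        rw [pow_succ', Equiv.Perm.mul_apply]
      rw [this, yade_top_apply]
      refine ih.trans ?_
      rw [isConj_iff]
      exact ⟨(w.base ((w.top ^ i) γ))⁻¹, by group⟩

end Ypart
section Cycles
variable {K Γ : Type*} [Group K] [Fintype Γ] [DecidableEq Γ]

/-- The cycle-type wreath cycle of `w` attached to a cycle `c`. -/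
def cycZ (w : Wr K Γ) (c : Equiv.Perm Γ) : Wr K Γ :=
  ⟨fun γ => if c γ ≠ γ then w.base γ else 1, c⟩

/-- The singleton-type wreath cycle of `w` at a fixed point `γ₀`. -/
def fixZ (w : Wr K Γ) (γ₀ : Γ) : Wr K Γ :=
  ⟨fun γ => if γ = γ₀ then w.base γ else 1, 1⟩

theorem mem_wCycles_iff {w z : Wr K Γ} :
    z ∈ wCycles w ↔
      (∃ c ∈ w.top.cycleFactorsFinset, z = cycZ w c) ∨
      (∃ γ₀, w.top γ₀ = γ₀ ∧ w.base γ₀ ≠ 1 ∧ z = fixZ w γ₀) := Iff.rfl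

theorem cycZ_mem {w : Wr K Γ} {c : Equiv.Perm Γ} (hc : c ∈ w.top.cycleFactorsFinset) :
    cycZ w c ∈ wCycles w := mem_wCycles_iff.2 (Or.inl ⟨c, hc, rfl⟩)

theorem fixZ_mem {w : Wr K Γ} {γ₀ : Γ} (h1 : w.top γ₀ = γ₀) (h2 : w.base γ₀ ≠ 1) :
    fixZ w γ₀ ∈ wCycles w := mem_wCycles_iff.2 (Or.inr ⟨γ₀, h1, h2, rfl⟩)

theorem terr_cycZ (w : Wr K Γ) (c : Equiv.Perm Γ) : terr (cycZ w c) = psupp c := by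
  ext γ
  by_cases h : c γ = γ <;> simp [terr, psupp, cycZ, h]

theorem terr_fixZ {w : Wr K Γ} {γ₀ : Γ} (h2 : w.base γ₀ ≠ 1) : terr (fixZ w γ₀) = {γ₀} := by
  ext γ
  by_cases h : γ = γ₀ <;> simp [terr, psupp, fixZ, h, h2]

theorem yade_fixZ (w : Wr K Γ) (γ₀ : Γ) : yade (fixZ w γ₀) γ₀ = w.base γ₀ := by
  rw [yade_eq_ypart]
  show ypart (fixZ w γ₀) γ₀ (orderOf (1 : Equiv.Perm Γ)) = _
  rw [orderOf_one, ypart_succ, ypart_zero, one_mul, pow_zero, Equiv.Perm.one_apply]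
  simp [fixZ]

theorem yade_cycZ {w : Wr K Γ} {c : Equiv.Perm Γ} (hc : c ∈ w.top.cycleFactorsFinset)
    {γ : Γ} (hγ : c γ ≠ γ) : yade (cycZ w c) γ = ypart w γ (orderOf c) := by
  have hsupp : γ ∈ c.support := Equiv.Perm.mem_support.2 hγ
  have hcyc : c = w.top.cycleOf γ := Equiv.Perm.cycle_is_cycleOf hsupp hc
  rw [yade_eq_ypart]
  show ypart (cycZ w c) γ (orderOf c) = _
  refine ypart_congr fun j _ => ?_
  have hpow : (c ^ j) γ = (w.top ^ j) γ := by
    rw [hcyc]; exact Equiv.Perm.cycleOf_pow_apply_self w.top γ j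
  have hmem : (c ^ j) γ ∈ c.support := Equiv.Perm.pow_apply_mem_support.2 hsupp
  show (if c ((c ^ j) γ) ≠ (c ^ j) γ then w.base ((c ^ j) γ) else 1) = _
  rw [if_pos (Equiv.Perm.mem_support.1 hmem), hpow]

theorem terr_nonempty {w z : Wr K Γ} (hz : z ∈ wCycles w) : (terr z).Nonempty := by
  rcases mem_wCycles_iff.1 hz with ⟨c, hc, rfl⟩ | ⟨γ₀, h1, h2, rfl⟩
  · obtain ⟨x, hx, -⟩ := (Equiv.Perm.mem_cycleFactorsFinset_iff.1 hc).1
    exact ⟨x, by rw [terr_cycZ]; exact hx⟩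
  · exact ⟨γ₀, by rw [terr_fixZ h2]; rfl⟩

/-- Within one wreath cycle all yades are conjugate. -/
theorem isConj_yade_of_mem {w z : Wr K Γ} (hz : z ∈ wCycles w) {γ δ : Γ}
    (hγ : γ ∈ terr z) (hδ : δ ∈ terr z) : IsConj (yade z γ) (yade z δ) := by
  rcases mem_wCycles_iff.1 hz with ⟨c, hc, rfl⟩ | ⟨γ₀, h1, h2, rfl⟩
  · rw [terr_cycZ] at hγ hδ
    obtain ⟨i, hi⟩ := (Equiv.Perm.mem_cycleFactorsFinset_iff.1 hc).1.exists_pow_eq hγ hδ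
    have : δ = (((cycZ w c).top) ^ i) γ := hi.symm
    rw [this]
    exact isConj_yade_pow _ _ _
  · rw [terr_fixZ h2] at hγ hδ
    rw [Set.mem_singleton_iff] at hγ hδ
    rw [hγ, hδ]

/-- Yades of wreath cycles with equal loads are conjugate. -/
theorem isConj_yade_of_load_eq {w v z z' : Wr K Γ} (hz : z ∈ wCycles w)
    (hz' : z' ∈ wCycles v) (hl : load z = load z') {γ δ : Γ}
    (hγ : γ ∈ terr z) (hδ : δ ∈ terr z') : IsConj (yade z γ) (yade z' δ) := by
  have h1 : yade z γ ∈ (load z).1 := ⟨γ, hγ, IsConj.refl _⟩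
  rw [hl] at h1
  obtain ⟨δ', hδ', hconj⟩ := h1
  exact (hconj.symm.trans (isConj_yade_of_mem hz' hδ' hδ)).symm.symm |>.symm
    |>.symm

theorem orderOf_pos_perm (f : Equiv.Perm Γ) : 0 < orderOf f := orderOf_pos f

/-- A cycle's set-support contains two distinct points. -/
theorem psupp_not_subsingleton {c : Equiv.Perm Γ} (hc : c.IsCycle) :
    ∃ x y, x ∈ psupp c ∧ y ∈ psupp c ∧ x ≠ y := by
  obtain ⟨x, hx, -⟩ := hc
  refine ⟨x, c x, hx, ?_, (Ne.symm hx)⟩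
  have : c x ∈ c.support := Equiv.Perm.apply_mem_support.2 (Equiv.Perm.mem_support.2 hx)
  exact Equiv.Perm.mem_support.1 this

end Cycles
section Forward
variable {K Γ : Type*} [Group K] [Fintype Γ] [DecidableEq Γ]

theorem terr_conj (a z : Wr K Γ) : terr (a⁻¹ * z * a) = a.top '' terr z := by
  ext γ
  have himg : γ ∈ a.top '' terr z ↔ a.top⁻¹ γ ∈ terr z := by
    constructor
    · rintro ⟨δ, hδ, rfl⟩; simpa using hδ
    · intro h; exact ⟨a.top⁻¹ γ, h, by simp⟩
  rw [himg]
  set δ := a.top⁻¹ γ with hδ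
  have hγ : γ = a.top δ := by simp [hδ]
  by_cases htop : z.top δ = δ
  · have h1 : ¬ (a⁻¹ * z * a).top γ ≠ γ := by
      rw [conj_top]
      simp only [Equiv.Perm.mul_apply, ← hδ, htop, ne_eq, not_not]
      rw [hγ]
    have h2 : ¬ z.top δ ≠ δ := not_not.2 htop
    simp only [terr, psupp, Set.mem_union, Set.mem_setOf_eq, h1, h2, false_or]
    rw [conj_base, ← hδ, htop]
    constructor
    · intro h hz; apply h; rw [hz]; group
    · intro h hz; apply h
      have := congrArg (fun x => a.base δ * x * (a.base δ)⁻¹) hz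
      simpa [mul_assoc] using this
  · have h1 : (a⁻¹ * z * a).top γ ≠ γ := by
      rw [conj_top]
      simp only [Equiv.Perm.mul_apply, ← hδ]
      rw [hγ]
      simpa using htop
    have h2 : z.top δ ≠ δ := htop
    simp [terr, psupp, h1, h2]

theorem ypart_conj (a z : Wr K Γ) (γ : Γ) (i : ℕ) :
    ypart (a⁻¹ * z * a) (a.top γ) i = (a.base γ)⁻¹ * ypart z γ i * a.base ((z.top ^ i) γ) := by
  induction i with
  | zero => simp [ypart_zero]
  | succ i ih =>
      rw [ypart_succ, ih, ypart_succ]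
      have htop : ((a⁻¹ * z * a).top ^ i) (a.top γ) = a.top ((z.top ^ i) γ) := by
        rw [conj_top, conj_pow, Equiv.Perm.mul_apply, Equiv.Perm.mul_apply]
        simp
      rw [htop, conj_base]
      have h1 : a.top⁻¹ (a.top ((z.top ^ i) γ)) = (z.top ^ i) γ := by simp
      rw [h1]
      have h2 : z.top ((z.top ^ i) γ) = (z.top ^ (i + 1)) γ := by
        rw [pow_succ', Equiv.Perm.mul_apply]
      rw [h2]
      group

theorem orderOf_conj_perm (t f : Equiv.Perm Γ) : orderOf (t * f * t⁻¹) = orderOf f := by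
  have : t * f * t⁻¹ = (MulAut.conj t) f := rfl
  rw [this, MulEquiv.orderOf_eq]

theorem yade_conj (a z : Wr K Γ) (γ : Γ) :
    yade (a⁻¹ * z * a) (a.top γ) = (a.base γ)⁻¹ * yade z γ * a.base γ := by
  rw [yade_eq_ypart, yade_eq_ypart]
  have ho : orderOf (a⁻¹ * z * a).top = orderOf z.top := by
    rw [conj_top, orderOf_conj_perm]
  rw [ho, ypart_conj]
  congr 2
  rw [pow_orderOf_eq_one]; rfl

theorem load_conj (a z : Wr K Γ) : load (a⁻¹ * z * a) = load z := by
  unfold load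
  refine Prod.ext ?_ ?_
  · ext x
    simp only [Set.mem_setOf_eq]
    constructor
    · rintro ⟨γ, hγ, hconj⟩
      rw [terr_conj] at hγ
      obtain ⟨δ, hδ, rfl⟩ := hγ
      rw [yade_conj] at hconj
      refine ⟨δ, hδ, ?_⟩
      refine IsConj.trans ?_ hconj
      rw [isConj_iff]
      exact ⟨(a.base δ)⁻¹, by group⟩
    · rintro ⟨δ, hδ, hconj⟩
      refine ⟨a.top δ, by rw [terr_conj]; exact ⟨δ, hδ, rfl⟩, ?_⟩
      rw [yade_conj]
      refine IsConj.trans ?_ hconj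
      rw [isConj_iff]
      exact ⟨a.base δ, by group⟩
  · simp only
    rw [conj_top, orderOf_conj_perm]

theorem conj_mem_wCycles {w z : Wr K Γ} (a : Wr K Γ) (hz : z ∈ wCycles w) :
    a⁻¹ * z * a ∈ wCycles (a⁻¹ * w * a) := by
  set t := a.top with ht
  rcases mem_wCycles_iff.1 hz with ⟨c, hc, rfl⟩ | ⟨γ₀, h1, h2, rfl⟩
  · refine mem_wCycles_iff.2 (Or.inl ⟨t * c * t⁻¹, ?_, ?_⟩)
    · rw [conj_top]
      exact (Equiv.Perm.mem_cycleFactorsFinset_conj w.top t c).2 hc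
    · refine ext' (funext fun γ => ?_) ?_
      · rw [conj_base]
        show _ = (if (t * c * t⁻¹) γ ≠ γ then (a⁻¹ * w * a).base γ else 1)
        have hcond : ((t * c * t⁻¹) γ ≠ γ) ↔ (c (t⁻¹ γ) ≠ t⁻¹ γ) := by
          simp only [Equiv.Perm.mul_apply]
          constructor
          · intro h hc'; apply h; rw [hc']; simp
          · intro h hc'; apply h
            have := congrArg (fun x => t⁻¹ x) hc'
            simpa using this
        by_cases hmov : c (t⁻¹ γ) ≠ t⁻¹ γ
        · rw [if_pos (hcond.2 hmov), conj_base]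
          show (a.base (t⁻¹ γ))⁻¹ * (if c (t⁻¹ γ) ≠ t⁻¹ γ then w.base (t⁻¹ γ) else 1) *
              a.base ((cycZ w c).top (t⁻¹ γ)) = _
          rw [if_pos hmov]
          have hagree : (cycZ w c).top (t⁻¹ γ) = w.top (t⁻¹ γ) :=
            (Equiv.Perm.mem_cycleFactorsFinset_iff.1 hc).2 _ (Equiv.Perm.mem_support.2 hmov)
          rw [hagree]
        · rw [if_neg fun h => hmov (hcond.1 h)]
          show (a.base (t⁻¹ γ))⁻¹ * (if c (t⁻¹ γ) ≠ t⁻¹ γ then w.base (t⁻¹ γ) else 1) *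
              a.base ((cycZ w c).top (t⁻¹ γ)) = 1
          rw [if_neg hmov]
          have : (cycZ w c).top (t⁻¹ γ) = t⁻¹ γ := not_not.1 hmov
          rw [this]
          group
      · rw [conj_top]; rfl
  · refine mem_wCycles_iff.2 (Or.inr ⟨t γ₀, ?_, ?_, ?_⟩)
    · rw [conj_top]
      simp only [Equiv.Perm.mul_apply]
      simp [h1, ht]
    · rw [conj_base]
      simp only [ht, Equiv.Perm.inv_apply_self]
      rw [h1]
      intro hcon
      apply h2
      have := congrArg (fun x => a.base γ₀ * x * (a.base γ₀)⁻¹) hcon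
      simpa [mul_assoc] using this
    · refine ext' (funext fun γ => ?_) ?_
      · rw [conj_base]
        show (a.base (t⁻¹ γ))⁻¹ * (if t⁻¹ γ = γ₀ then w.base (t⁻¹ γ) else 1) *
            a.base ((fixZ w γ₀).top (t⁻¹ γ)) = if γ = t γ₀ then (a⁻¹ * w * a).base γ else 1
        have htopz : (fixZ w γ₀).top (t⁻¹ γ) = t⁻¹ γ := rfl
        rw [htopz]
        by_cases hγ : γ = t γ₀
        · have hδ : t⁻¹ γ = γ₀ := by rw [hγ]; simp
          rw [if_pos hδ, if_pos hγ, conj_base, hδ, h1]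
        · have hδ : ¬ t⁻¹ γ = γ₀ := by
            intro h; apply hγ; rw [← h]; simp
          rw [if_neg hδ, if_neg hγ]
          group
      · rw [conj_top]
        show t * (1 : Equiv.Perm Γ) * t⁻¹ = 1
        group

theorem wCycles_conj (a w : Wr K Γ) :
    wCycles (a⁻¹ * w * a) = (fun z => a⁻¹ * z * a) '' wCycles w := by
  ext z'
  constructor
  · intro hz'
    have := conj_mem_wCycles (w := a⁻¹ * w * a) a⁻¹ hz'
    have heq : (a⁻¹)⁻¹ * (a⁻¹ * w * a) * a⁻¹ = w := by group
    rw [heq] at this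
    exact ⟨(a⁻¹)⁻¹ * z' * a⁻¹, this, by group⟩
  · rintro ⟨z, hz, rfl⟩
    exact conj_mem_wCycles a hz

theorem tdecomp_conj (a w : Wr K Γ) (L : Set K × ℕ) :
    tdecomp (a⁻¹ * w * a) L = (fun Ω => a.top '' Ω) '' tdecomp w L := by
  ext Ω
  constructor
  · rintro ⟨z', hz', hload, rfl⟩
    rw [wCycles_conj] at hz'
    obtain ⟨z, hz, rfl⟩ := hz'
    exact ⟨terr z, ⟨z, hz, by rw [← load_conj a z]; exact hload, rfl⟩, (terr_conj a z).symm⟩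
  · rintro ⟨Ω₀, ⟨z, hz, hload, rfl⟩, rfl⟩
    exact ⟨a⁻¹ * z * a, (wCycles_conj a w).symm ▸ Set.mem_image_of_mem _ hz,
      by rw [load_conj]; exact hload, (terr_conj a z).symm⟩

end Forward
section Backward
variable {K Γ : Type*} [Group K] [Fintype Γ] [DecidableEq Γ]

open Classical in
/-- Pick a conjugator if one exists. -/
noncomputable def pick (A B : K) : K :=
  if h : ∃ k : K, k⁻¹ * A * k = B then h.choose else 1

theorem pick_spec {A B : K} (h : ∃ k : K, k⁻¹ * A * k = B) :
    (pick A B)⁻¹ * A * pick A B = B := by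
  rw [pick, dif_pos h]
  exact h.choose_spec

open Classical in
/-- A base point for a cycle. -/
noncomputable def bpt (c : Equiv.Perm Γ) (γ : Γ) : Γ :=
  if h : ∃ δ, c δ ≠ δ then h.choose else γ

theorem bpt_eq {c : Equiv.Perm Γ} (h : ∃ δ, c δ ≠ δ) (γ : Γ) : bpt c γ = h.choose := dif_pos h

theorem bpt_moved {c : Equiv.Perm Γ} (h : ∃ δ, c δ ≠ δ) (γ : Γ) : c (bpt c γ) ≠ bpt c γ := by
  rw [bpt_eq h]; exact h.choose_spec

open Classical in
/-- Index of `γ` in the orbit of `γ₀`. -/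
noncomputable def idx (h : Equiv.Perm Γ) (γ₀ γ : Γ) : ℕ :=
  if hi : ∃ i : ℕ, (h ^ i) γ₀ = γ then Nat.find hi else 0

theorem idx_eq {h : Equiv.Perm Γ} {γ₀ γ : Γ} (hi : ∃ i : ℕ, (h ^ i) γ₀ = γ) :
    idx h γ₀ γ = Nat.find hi := dif_pos hi

/-- The conjugating base function. -/
noncomputable def cBase (w v : Wr K Γ) (t : Equiv.Perm Γ) : Γ → K := fun γ =>
  if w.top γ ≠ γ then
    (ypart w (bpt (w.top.cycleOf γ) γ) (idx w.top (bpt (w.top.cycleOf γ) γ) γ))⁻¹ *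
      pick (ypart w (bpt (w.top.cycleOf γ) γ) (orderOf (w.top.cycleOf γ)))
           (ypart v (t (bpt (w.top.cycleOf γ) γ)) (orderOf (w.top.cycleOf γ))) *
      ypart v (t (bpt (w.top.cycleOf γ) γ)) (idx w.top (bpt (w.top.cycleOf γ) γ) γ)
  else pick (w.base γ) (v.base (t γ))

variable {w v : Wr K Γ} {t : Equiv.Perm Γ}

theorem match_lemma (hP : ∀ L : Set K × ℕ, (fun Ω => (⇑t) '' Ω) '' tdecomp w L = tdecomp v L)
    {z : Wr K Γ} (hz : z ∈ wCycles w) :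
    ∃ z' ∈ wCycles v, load z' = load z ∧ (⇑t) '' terr z = terr z' := by
  have h1 : terr z ∈ tdecomp w (load z) := ⟨z, hz, rfl, rfl⟩
  have h2 : (⇑t) '' terr z ∈ tdecomp v (load z) := by
    rw [← hP]; exact ⟨terr z, h1, rfl⟩
  obtain ⟨z', hz', hl, he⟩ := h2
  exact ⟨z', hz', hl, he.symm ▸ rfl⟩

theorem exists_k_cyc (hP : ∀ L : Set K × ℕ, (fun Ω => (⇑t) '' Ω) '' tdecomp w L = tdecomp v L)
    {γ₀ : Γ} (hm : w.top γ₀ ≠ γ₀) :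
    ∃ k : K, k⁻¹ * ypart w γ₀ (orderOf (w.top.cycleOf γ₀)) * k
      = ypart v (t γ₀) (orderOf (w.top.cycleOf γ₀)) := by
  set c := w.top.cycleOf γ₀ with hcdef
  have hγ₀c : c γ₀ ≠ γ₀ := by
    rw [hcdef, Equiv.Perm.cycleOf_apply_self]; exact hm
  have hc : c ∈ w.top.cycleFactorsFinset :=
    Equiv.Perm.cycleOf_mem_cycleFactorsFinset_iff.2 (Equiv.Perm.mem_support.2 hm)
  obtain ⟨z', hz', hl, he⟩ := match_lemma hP (cycZ_mem hc)
  have hterrz : terr (cycZ w c) = psupp c := terr_cycZ w c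
  have hγ₀z : γ₀ ∈ terr (cycZ w c) := by rw [hterrz]; exact hγ₀c
  have htγ₀ : t γ₀ ∈ terr z' := by rw [← he]; exact ⟨γ₀, hγ₀z, rfl⟩
  have hyade' : yade z' (t γ₀) = ypart v (t γ₀) (orderOf c) := by
    rcases mem_wCycles_iff.1 hz' with ⟨c'', hc'', rfl⟩ | ⟨δ₀, hv1, hv2, rfl⟩
    · have hmov : c'' (t γ₀) ≠ t γ₀ := by
        have h := htγ₀; rw [terr_cycZ] at h; exact h
      rw [yade_cycZ hc'' hmov]
      have hord : orderOf c'' = orderOf c := by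
        have h2' := congrArg Prod.snd hl
        simpa [load, cycZ] using h2'
      rw [hord]
    · exfalso
      obtain ⟨x, y, hx, hy, hxy⟩ :=
        psupp_not_subsingleton (Equiv.Perm.mem_cycleFactorsFinset_iff.1 hc).1
      have hxz : t x ∈ terr (fixZ v δ₀) := by rw [← he, hterrz]; exact ⟨x, hx, rfl⟩
      have hyz : t y ∈ terr (fixZ v δ₀) := by rw [← he, hterrz]; exact ⟨y, hy, rfl⟩
      rw [terr_fixZ hv2, Set.mem_singleton_iff] at hxz hyz
      exact hxy (t.injective (hxz.trans hyz.symm))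
  have hyade : yade (cycZ w c) γ₀ = ypart w γ₀ (orderOf c) := yade_cycZ hc hγ₀c
  have hconj := isConj_yade_of_load_eq (cycZ_mem hc) hz' hl.symm hγ₀z htγ₀
  rw [hyade, hyade'] at hconj
  rw [isConj_iff] at hconj
  obtain ⟨u, hu⟩ := hconj
  exact ⟨u⁻¹, by rw [inv_inv]; exact hu⟩

theorem exists_k_fix (htop : t * w.top * t⁻¹ = v.top)
    (hP : ∀ L : Set K × ℕ, (fun Ω => (⇑t) '' Ω) '' tdecomp w L = tdecomp v L)
    {γ : Γ} (hfix : w.top γ = γ) :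
    ∃ k : K, k⁻¹ * w.base γ * k = v.base (t γ) := by
  by_cases hb : w.base γ = 1
  · suffices hv : v.base (t γ) = 1 by
      exact ⟨1, by rw [hb, hv]; group⟩
    by_contra hv
    have hvfix : v.top (t γ) = t γ := by
      rw [← htop]
      simp only [Equiv.Perm.mul_apply, Equiv.Perm.inv_apply_self]
      rw [hfix]
    have hz' : fixZ v (t γ) ∈ wCycles v := fixZ_mem hvfix hv
    have h1 : terr (fixZ v (t γ)) ∈ tdecomp v (load (fixZ v (t γ))) := ⟨_, hz', rfl, rfl⟩
    rw [← hP] at h1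
    obtain ⟨Ω, hΩ, hΩe⟩ := h1
    rw [terr_fixZ hv] at hΩe
    obtain ⟨z, hz, -, rfl⟩ := hΩ
    have hsub : ∀ x ∈ terr z, x = γ := by
      intro x hx
      have hmem : t x ∈ ({t γ} : Set Γ) := hΩe ▸ ⟨x, hx, rfl⟩
      exact t.injective (Set.mem_singleton_iff.1 hmem)
    have hγz : γ ∈ terr z := by
      obtain ⟨x, hx⟩ := terr_nonempty hz
      rwa [← hsub x hx]
    rcases mem_wCycles_iff.1 hz with ⟨c, hc, rfl⟩ | ⟨γ₀, h1', h2', rfl⟩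
    · obtain ⟨x, y, hx, hy, hxy⟩ :=
        psupp_not_subsingleton (Equiv.Perm.mem_cycleFactorsFinset_iff.1 hc).1
      rw [← terr_cycZ w c] at hx hy
      exact hxy ((hsub x hx).trans (hsub y hy).symm)
    · have hmem : γ₀ ∈ terr (fixZ w γ₀) := by rw [terr_fixZ h2']; rfl
      exact ((hsub γ₀ hmem) ▸ h2') hb
  · have hz : fixZ w γ ∈ wCycles w := fixZ_mem hfix hb
    obtain ⟨z', hz', hl, he⟩ := match_lemma hP hz
    rw [terr_fixZ hb, Set.image_singleton] at he
    have htγ : t γ ∈ terr z' := by rw [← he]; rfl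
    have hyz : yade (fixZ w γ) γ = w.base γ := yade_fixZ w γ
    have hy' : yade z' (t γ) = v.base (t γ) := by
      rcases mem_wCycles_iff.1 hz' with ⟨c'', hc'', rfl⟩ | ⟨δ₀, hv1, hv2, rfl⟩
      · exfalso
        obtain ⟨x, y, hx, hy, hxy⟩ :=
          psupp_not_subsingleton (Equiv.Perm.mem_cycleFactorsFinset_iff.1 hc'').1
        rw [← terr_cycZ v c'', ← he, Set.mem_singleton_iff] at hx hy
        exact hxy (hx.trans hy.symm)
      · have hδ : δ₀ = t γ := by
          have hmem := htγ
          rw [terr_fixZ hv2, Set.mem_singleton_iff] at hmem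
          exact hmem.symm
        subst hδ
        exact yade_fixZ v (t γ)
    have hγm : γ ∈ terr (fixZ w γ) := by rw [terr_fixZ hb]; rfl
    have hconj := isConj_yade_of_load_eq hz hz' hl.symm hγm htγ
    rw [hyz, hy'] at hconj
    rw [isConj_iff] at hconj
    obtain ⟨u, hu⟩ := hconj
    exact ⟨u⁻¹, by rw [inv_inv]; exact hu⟩

end Backward
section Spec
variable {K Γ : Type*} [Group K] [Fintype Γ] [DecidableEq Γ]
variable {w v : Wr K Γ} {t : Equiv.Perm Γ}

theorem cBase_moved {γ : Γ} (hm : w.top γ ≠ γ) :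
    cBase w v t γ =
      (ypart w (bpt (w.top.cycleOf γ) γ) (idx w.top (bpt (w.top.cycleOf γ) γ) γ))⁻¹ *
        pick (ypart w (bpt (w.top.cycleOf γ) γ) (orderOf (w.top.cycleOf γ)))
             (ypart v (t (bpt (w.top.cycleOf γ) γ)) (orderOf (w.top.cycleOf γ))) *
        ypart v (t (bpt (w.top.cycleOf γ) γ)) (idx w.top (bpt (w.top.cycleOf γ) γ) γ) := by
  simp only [cBase]
  rw [if_pos hm]

theorem cBase_fixed {γ : Γ} (hm : w.top γ = γ) :
    cBase w v t γ = pick (w.base γ) (v.base (t γ)) := by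
  simp only [cBase]
  rw [if_neg (not_not.2 hm)]

theorem cBase_spec (htop : t * w.top * t⁻¹ = v.top)
    (hP : ∀ L : Set K × ℕ, (fun Ω => (⇑t) '' Ω) '' tdecomp w L = tdecomp v L) (γ : Γ) :
    (cBase w v t γ)⁻¹ * w.base γ * cBase w v t (w.top γ) = v.base (t γ) := by
  by_cases hm : w.top γ = γ
  · rw [hm, cBase_fixed hm]
    exact pick_spec (exists_k_fix htop hP hm)
  · -- moved point
    have hγsup : γ ∈ w.top.support := Equiv.Perm.mem_support.2 hm
    have hc : w.top.cycleOf γ ∈ w.top.cycleFactorsFinset :=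
      Equiv.Perm.cycleOf_mem_cycleFactorsFinset_iff.2 hγsup
    set c := w.top.cycleOf γ with hc_def
    have hcyc : c.IsCycle := (Equiv.Perm.mem_cycleFactorsFinset_iff.1 hc).1
    have hcγ : c γ ≠ γ := by rw [hc_def, Equiv.Perm.cycleOf_apply_self]; exact hm
    have hex : ∃ δ, c δ ≠ δ := ⟨γ, hcγ⟩
    set γ₀ := bpt c γ with hγ₀_def
    have hγ₀m : c γ₀ ≠ γ₀ := bpt_moved hex γ
    have hγ₀sup : γ₀ ∈ c.support := Equiv.Perm.mem_support.2 hγ₀m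
    have hcOf : c = w.top.cycleOf γ₀ := Equiv.Perm.cycle_is_cycleOf hγ₀sup hc
    have hpow : ∀ j : ℕ, (c ^ j) γ₀ = (w.top ^ j) γ₀ := fun j => by
      rw [hcOf]; exact Equiv.Perm.cycleOf_pow_apply_self w.top γ₀ j
    set m := orderOf c with hm_def
    have hm0 : 0 < m := orderOf_pos c
    have hwm : (w.top ^ m) γ₀ = γ₀ := by
      rw [← hpow, hm_def, pow_orderOf_eq_one]; rfl
    have hinj : ∀ j, 0 < j → j < m → (w.top ^ j) γ₀ ≠ γ₀ := by
      intro j hj0 hjm hjeq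
      rw [← hpow] at hjeq
      have h1 : c ^ j = 1 := (hcyc.pow_eq_one_iff' hγ₀m).2 hjeq
      exact absurd (Nat.le_of_dvd hj0 (orderOf_dvd_of_pow_eq_one h1)) (not_le.2 hjm)
    have hiex : ∃ i : ℕ, (w.top ^ i) γ₀ = γ := by
      obtain ⟨i, hi⟩ := hcyc.exists_pow_eq hγ₀m hcγ
      exact ⟨i, by rw [← hpow]; exact hi⟩
    have hwγ₀m : w.top γ₀ ≠ γ₀ := by
      have := (Equiv.Perm.mem_cycleFactorsFinset_iff.1 hc).2 γ₀ hγ₀sup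
      rw [← this]; exact hγ₀m
    set i := idx w.top γ₀ γ with hi_def
    have hidx : i = Nat.find hiex := by rw [hi_def]; exact idx_eq hiex
    have hi_spec : (w.top ^ i) γ₀ = γ := by rw [hidx]; exact Nat.find_spec hiex
    have hilt : i < m := by
      have hmod : (w.top ^ (Nat.find hiex % m)) γ₀ = γ := by
        rw [← hpow, hm_def, pow_mod_orderOf, hpow]
        exact Nat.find_spec hiex
      have h1 : Nat.find hiex ≤ Nat.find hiex % m := Nat.find_min' hiex hmod
      calc i = Nat.find hiex := hidx
        _ ≤ Nat.find hiex % m := h1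
        _ < m := Nat.mod_lt _ hm0
    -- the next point
    have hmov' : w.top (w.top γ) ≠ w.top γ := fun hh => hm (w.top.injective hh)
    have hcOfγ' : w.top.cycleOf (w.top γ) = c := by
      rw [hc_def]; exact Equiv.Perm.cycleOf_self_apply w.top γ
    have hbpt' : bpt c (w.top γ) = γ₀ := by
      rw [bpt_eq hex, hγ₀_def, bpt_eq hex]
    have hiex' : ∃ j : ℕ, (w.top ^ j) γ₀ = w.top γ :=
      ⟨i + 1, by rw [pow_succ', Equiv.Perm.mul_apply, hi_spec]⟩
    -- k and its basic equation (needed in the wrap-around case)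
    have hkex : ∃ k : K, k⁻¹ * ypart w γ₀ m * k = ypart v (t γ₀) m := by
      have h := exists_k_cyc (w := w) (v := v) (t := t) hP hwγ₀m
      rwa [← hcOf, ← hm_def] at h
    have hvti : (v.top ^ i) (t γ₀) = t γ := by
      rw [← htop, conj_pow, Equiv.Perm.mul_apply, Equiv.Perm.mul_apply,
        Equiv.Perm.inv_apply_self, hi_spec]
    rw [cBase_moved hm, cBase_moved hmov', hcOfγ', ← hc_def, ← hγ₀_def, hbpt', ← hm_def,
      ← hi_def]
    by_cases hcase : i + 1 < m
    · -- generic step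
      have hidx' : idx w.top γ₀ (w.top γ) = i + 1 := by
        rw [idx_eq hiex']
        refine (Nat.find_eq_iff hiex').2 ⟨?_, ?_⟩
        · rw [pow_succ', Equiv.Perm.mul_apply, hi_spec]
        · intro j hj hjeq
          have h1 : (w.top ^ (i + 1)) γ₀ = (w.top ^ j) ((w.top ^ (i + 1 - j)) γ₀) := by
            have hle : j ≤ i + 1 := by omega
            rw [← Equiv.Perm.mul_apply, ← pow_add, Nat.add_sub_cancel' hle]
          have h2 : (w.top ^ j) γ₀ = (w.top ^ j) ((w.top ^ (i + 1 - j)) γ₀) := by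
            rw [← h1, hjeq, pow_succ', Equiv.Perm.mul_apply, hi_spec]
          have h3 : (w.top ^ (i + 1 - j)) γ₀ = γ₀ := ((w.top ^ j).injective h2).symm
          exact hinj (i + 1 - j) (by omega) (by omega) h3
      rw [hidx']
      rw [ypart_succ w γ₀ i, ypart_succ v (t γ₀) i, hi_spec, hvti]
      group
    · -- wrap-around
      have him : i + 1 = m := by omega
      have hγ' : w.top γ = γ₀ := by
        rw [← hi_spec, ← Equiv.Perm.mul_apply, ← pow_succ', him, hwm]
      have hidx0 : idx w.top γ₀ (w.top γ) = 0 := by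
        rw [idx_eq hiex']
        exact Nat.le_zero.1 (Nat.find_min' hiex' (by rw [pow_zero, hγ']; rfl))
      rw [hidx0, ypart_zero, ypart_zero]
      have hpick := pick_spec hkex
      have hA : ypart w γ₀ i * w.base γ = ypart w γ₀ m := by
        rw [← him, ypart_succ, hi_spec]
      have hBv : ypart v (t γ₀) m = ypart v (t γ₀) i * v.base (t γ) := by
        rw [← him, ypart_succ, hvti]
      set k := pick (ypart w γ₀ m) (ypart v (t γ₀) m) with hk_def
      have key : k⁻¹ * (ypart w γ₀ i * w.base γ) * k = ypart v (t γ₀) i * v.base (t γ) := by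
        rw [hA, ← hBv]; exact hpick
      calc ((ypart w γ₀ i)⁻¹ * k * ypart v (t γ₀) i)⁻¹ * w.base γ * ((1 : K)⁻¹ * k * 1)
          = (ypart v (t γ₀) i)⁻¹ * (k⁻¹ * (ypart w γ₀ i * w.base γ) * k) := by group
        _ = (ypart v (t γ₀) i)⁻¹ * (ypart v (t γ₀) i * v.base (t γ)) := by rw [key]
        _ = v.base (t γ) := by group

end Spec

end WrAux

open WrAux in
/-- `w, v ∈ S` are conjugate in `W = K ≀_Γ H` iff there is `t ∈ H`
with `h^t = g` and `P(w)^t = P(v)`. -/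
theorem isConj_iff_exists_tdecomp {K Γ : Type*} [Group K] [Fintype Γ] [DecidableEq Γ]
    (H : Subgroup (Equiv.Perm Γ)) (w v : Wr K Γ) :
    (∃ a : Wr K Γ, a.top ∈ H ∧ a⁻¹ * w * a = v) ↔
      (∃ t ∈ H, t * w.top * t⁻¹ = v.top ∧
        ∀ L : Set K × ℕ, (fun Ω => (⇑t) '' Ω) '' tdecomp w L = tdecomp v L) := by
  constructor
  · rintro ⟨a, haH, rfl⟩
    exact ⟨a.top, haH, (conj_top a w).symm, fun L => (tdecomp_conj a w L).symm⟩
  · rintro ⟨t, htH, htop, hP⟩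
    refine ⟨⟨cBase w v t, t⟩, htH, ?_⟩
    refine ext' (funext fun γ => ?_) ?_
    · rw [conj_base]
      show (cBase w v t (t⁻¹ γ))⁻¹ * w.base (t⁻¹ γ) * cBase w v t (w.top (t⁻¹ γ)) = v.base γ
      have h := cBase_spec htop hP (t⁻¹ γ)
      rwa [Equiv.Perm.apply_inv_self] at h
    · rw [conj_top]
      show t * w.top * t⁻¹ = v.top
      exact htop
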